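/- arXiv:1608.07860 — 6 statements merged into one kernel-verified Lean document; each statement's English description precedes it below -/
import Mathlib

section
/- Let f be a measurable function on ℝ such that Δ(x) = f(x + π/2) − f(x) is in L²(ℝ) and x ↦ f(x)·sin(x) is in L²(ℝ). Then f ∈ L²(ℝ). -/
open Real MeasureTheory

theorem shifts_sine_L2 (f : ℝ → ℝ) (hf : Measurable f)
    (hΔ : MemLp (fun x => f (x + π / 2) - f x) 2 volume)
    (hs : MemLp (fun x => f x * Real.sin x) 2 volume) :
    MemLp f 2 volume := by
  have hmp : MeasurePreserving (fun x : ℝ => x + π / 2) volume volume :=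
    measurePreserving_add_right volume (π / 2)
  -- f(x+π/2) * sin(x+π/2) ∈ L²
  have h1 : MemLp (fun x => f (x + π / 2) * Real.sin (x + π / 2)) 2 volume :=
    hs.comp_measurePreserving hmp
  have h1' : MemLp (fun x => f (x + π / 2) * Real.cos x) 2 volume := by
    refine h1.ae_eq ?_
    filter_upwards with x
    rw [Real.sin_add_pi_div_two]
  -- Δ(x) * cos x ∈ L²
  have h2 : MemLp (fun x => (f (x + π / 2) - f x) * Real.cos x) 2 volume := by
    refine hΔ.of_le ?_ ?_
    · exact ((hf.comp (measurable_id.add_const _)).sub hf).mul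
        Real.measurable_cos |>.aestronglyMeasurable
    · filter_upwards with x
      simp only [norm_mul, Real.norm_eq_abs]
      calc |f (x + π / 2) - f x| * |Real.cos x|
          ≤ |f (x + π / 2) - f x| * 1 :=
            mul_le_mul_of_nonneg_left (Real.abs_cos_le_one x) (abs_nonneg _)
        _ = |f (x + π / 2) - f x| := mul_one _
  -- f(x) cos x ∈ L²
  have hc : MemLp (fun x => f x * Real.cos x) 2 volume := by
    refine (h1'.sub h2).ae_eq ?_
    filter_upwards with x
    simp only [Pi.sub_apply]
    ring
  -- (f sin) * sin ∈ L², (f cos) * cos ∈ L²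
  have habs : ∀ x : ℝ, |Real.sin x| ≤ 1 := fun x => Real.abs_sin_le_one x
  have t1 : MemLp (fun x => (f x * Real.sin x) * Real.sin x) 2 volume := by
    refine hs.of_le ((hs.aestronglyMeasurable.aemeasurable.mul
      Real.measurable_sin.aemeasurable).aestronglyMeasurable) ?_
    filter_upwards with x
    simp only [Real.norm_eq_abs]
    rw [abs_mul]
    calc |f x * Real.sin x| * |Real.sin x| ≤ |f x * Real.sin x| * 1 :=
          mul_le_mul_of_nonneg_left (habs x) (abs_nonneg _)
      _ = _ := mul_one _
  have t2 : MemLp (fun x => (f x * Real.cos x) * Real.cos x) 2 volume := by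
    refine hc.of_le ((hc.aestronglyMeasurable.aemeasurable.mul
      Real.measurable_cos.aemeasurable).aestronglyMeasurable) ?_
    filter_upwards with x
    simp only [Real.norm_eq_abs]
    rw [abs_mul]
    calc |f x * Real.cos x| * |Real.cos x| ≤ |f x * Real.cos x| * 1 :=
          mul_le_mul_of_nonneg_left (Real.abs_cos_le_one x) (abs_nonneg _)
      _ = _ := mul_one _
  refine (t1.add t2).ae_eq ?_
  filter_upwards with x
  simp only [Pi.add_apply]
  linear_combination f x * Real.sin_sq_add_cos_sq x
end

section
/- Let f be a measurable function on ℝ, let 1 ≤ p < ∞, and suppose f(x + π/2) − f(x) ∈ Lᵖ(ℝ) and f(x)·sin(x) ∈ Lᵖ(ℝ). Then f ∈ Lᵖ(ℝ). -/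
open Real MeasureTheory

theorem shifts_sine_Lp (p : ℝ) (hp : 1 ≤ p) (f : ℝ → ℝ) (hf : Measurable f)
    (hΔ : MemLp (fun x => f (x + π / 2) - f x) (ENNReal.ofReal p) volume)
    (hs : MemLp (fun x => f x * Real.sin x) (ENNReal.ofReal p) volume) :
    MemLp f (ENNReal.ofReal p) volume := by
  have h1 : MemLp (fun x => f (x + π / 2) * Real.sin (x + π / 2)) (ENNReal.ofReal p) volume :=
    hs.comp_measurePreserving (measurePreserving_add_right volume (π / 2))
  have h2 : MemLp (fun x => (f (x + π / 2) - f x) * Real.sin (x + π / 2))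
      (ENNReal.ofReal p) volume := by
    refine hΔ.mono ?_ (Filter.Eventually.of_forall fun x => ?_)
    · exact (((hf.comp (measurable_id.add_const _)).sub hf).mul
        (Real.measurable_sin.comp (measurable_id.add_const _))).aestronglyMeasurable
    · simp only [norm_mul, Real.norm_eq_abs]
      calc |f (x + π / 2) - f x| * |Real.sin (x + π / 2)|
          ≤ |f (x + π / 2) - f x| * 1 :=
            mul_le_mul_of_nonneg_left (Real.abs_sin_le_one _) (abs_nonneg _)
        _ = |f (x + π / 2) - f x| := mul_one _
  have hcos : MemLp (fun x => f x * Real.cos x) (ENNReal.ofReal p) volume := by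
    have heq : (fun x => f x * Real.cos x) =
        fun x => f (x + π / 2) * Real.sin (x + π / 2) -
          (f (x + π / 2) - f x) * Real.sin (x + π / 2) := by
      funext x
      rw [Real.sin_add_pi_div_two]
      ring
    rw [heq]
    exact h1.sub h2
  have hsum : MemLp (fun x => |f x * Real.sin x| + |f x * Real.cos x|)
      (ENNReal.ofReal p) volume := by
    have := hs.abs.add hcos.abs
    exact this
  refine hsum.mono hf.aestronglyMeasurable (Filter.Eventually.of_forall fun x => ?_)
  simp only [Real.norm_eq_abs]
  have h1 : Real.sin x ^ 2 ≤ |Real.sin x| := by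
    calc Real.sin x ^ 2 = |Real.sin x| * |Real.sin x| := by rw [← abs_mul, ← sq, abs_sq]
      _ ≤ 1 * |Real.sin x| := by
          exact mul_le_mul_of_nonneg_right (Real.abs_sin_le_one _) (abs_nonneg _)
      _ = |Real.sin x| := one_mul _
  have h2 : Real.cos x ^ 2 ≤ |Real.cos x| := by
    calc Real.cos x ^ 2 = |Real.cos x| * |Real.cos x| := by rw [← abs_mul, ← sq, abs_sq]
      _ ≤ 1 * |Real.cos x| := by
          exact mul_le_mul_of_nonneg_right (Real.abs_cos_le_one _) (abs_nonneg _)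
      _ = |Real.cos x| := one_mul _
  calc |f x| = |f x| * (Real.sin x ^ 2 + Real.cos x ^ 2) := by
        rw [Real.sin_sq_add_cos_sq, mul_one]
    _ ≤ |f x| * (|Real.sin x| + |Real.cos x|) :=
        mul_le_mul_of_nonneg_left (add_le_add h1 h2) (abs_nonneg _)
    _ = |f x * Real.sin x| + |f x * Real.cos x| := by rw [abs_mul, abs_mul]; ring
    _ ≤ |(|f x * Real.sin x| + |f x * Real.cos x|)| := le_abs_self _
end

section
/- Let 1 ≤ p < ∞ and let T, t, s be real numbers with t·s = T and T ∉ πℤ. If f is measurable on ℝ with f(·+t) − f(·) ∈ Lᵖ(ℝ) and (sin(s·))·f(·) ∈ Lᵖ(ℝ), then f ∈ Lᵖ(ℝ). -/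
open Real MeasureTheory

lemma memlp_mul_bounded {p : ENNReal} (g h : ℝ → ℝ) (hg : Measurable g)
    (hb : ∀ x, |g x| ≤ 1) (hh : MemLp h p volume)
    (hhm : AEStronglyMeasurable h volume) :
    MemLp (fun x => g x * h x) p volume := by
  refine hh.of_le_mul (c := 1) (hg.aestronglyMeasurable.mul hhm) ?_
  filter_upwards with x
  simp only [norm_mul, Real.norm_eq_abs, one_mul]
  exact mul_le_of_le_one_left (abs_nonneg _) (hb x)

theorem shifts_sine_Lp_general (p : ℝ) (hp : 1 ≤ p) (t s T : ℝ)
    (ht : t ≠ 0) (hs : s ≠ 0) (hT : t * s = T) (hTpi : ∀ k : ℤ, T ≠ k * π)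
    (f : ℝ → ℝ) (hf : Measurable f)
    (hΔ : MemLp (fun x => f (x + t) - f x) (ENNReal.ofReal p) volume)
    (hsin : MemLp (fun x => Real.sin (s * x) * f x) (ENNReal.ofReal p) volume) :
    MemLp f (ENNReal.ofReal p) volume := by
  set q := ENNReal.ofReal p with hq
  have hsinT : Real.sin T ≠ 0 := by
    intro h
    obtain ⟨n, hn⟩ := Real.sin_eq_zero_iff.mp h
    exact hTpi n (by rw [← hn])
  have hms : Measurable fun x : ℝ => Real.sin (s * x) :=
    Real.measurable_sin.comp (measurable_const.mul measurable_id)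
  have hmc : Measurable fun x : ℝ => Real.cos (s * x) :=
    Real.measurable_cos.comp (measurable_const.mul measurable_id)
  have hft : Measurable fun x => f (x + t) := hf.comp (measurable_id.add_const t)
  have hmp : MeasurePreserving (fun x : ℝ => x + t) volume volume :=
    measurePreserving_add_right volume t
  -- translated g: x ↦ sin(s(x+t)) f(x+t) ∈ Lᵖ
  have hgt : MemLp (fun x => Real.sin (s * (x + t)) * f (x + t)) q volume :=
    hsin.comp_measurePreserving hmp
  -- sin(sx) * (f(x+t) - f x) ∈ Lᵖ
  have hΔ' : MemLp (fun x => Real.sin (s * x) * (f (x + t) - f x)) q volume :=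
    memlp_mul_bounded _ _ hms (fun x => abs_sin_le_one _) hΔ
      (hft.sub hf).aestronglyMeasurable
  -- sin(sx) * f(x+t) ∈ Lᵖ
  have h1 : MemLp (fun x => Real.sin (s * x) * f (x + t)) q volume := by
    have heq : (fun x => Real.sin (s * x) * f (x + t)) =
        fun x => Real.sin (s * x) * f x + Real.sin (s * x) * (f (x + t) - f x) := by
      funext x; ring
    rw [heq]; exact hsin.add hΔ'
  -- cos(sx) * f(x+t) ∈ Lᵖ, using sin(s(x+t)) = sin(sx)cos T + cos(sx)sin T
  have h2 : MemLp (fun x => Real.cos (s * x) * f (x + t)) q volume := by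
    have heq : (fun x => Real.cos (s * x) * f (x + t)) =
        fun x => (Real.sin T)⁻¹ * (Real.sin (s * (x + t)) * f (x + t))
          + (-(Real.cos T) * (Real.sin T)⁻¹) * (Real.sin (s * x) * f (x + t)) := by
      funext x
      have hst : s * (x + t) = s * x + T := by rw [← hT]; ring
      rw [hst, Real.sin_add]
      field_simp
      ring
    rw [heq]
    exact (hgt.const_mul _).add (h1.const_mul _)
  -- cos(sx) * f x ∈ Lᵖ
  have h3 : MemLp (fun x => Real.cos (s * x) * f x) q volume := by
    have hΔc : MemLp (fun x => Real.cos (s * x) * (f (x + t) - f x)) q volume :=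
      memlp_mul_bounded _ _ hmc (fun x => abs_cos_le_one _) hΔ
        (hft.sub hf).aestronglyMeasurable
    have heq : (fun x => Real.cos (s * x) * f x) =
        fun x => Real.cos (s * x) * f (x + t)
          + (-1 : ℝ) * (Real.cos (s * x) * (f (x + t) - f x)) := by
      funext x; ring
    rw [heq]
    exact h2.add (hΔc.const_mul _)
  -- f = sin(sx)*(sin(sx)f) + cos(sx)*(cos(sx)f)
  have hfin : MemLp (fun x => Real.sin (s * x) * (Real.sin (s * x) * f x)
      + Real.cos (s * x) * (Real.cos (s * x) * f x)) q volume :=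
    (memlp_mul_bounded _ _ hms (fun x => abs_sin_le_one _) hsin
        (hms.mul hf).aestronglyMeasurable).add
      (memlp_mul_bounded _ _ hmc (fun x => abs_cos_le_one _) h3
        (hmc.mul hf).aestronglyMeasurable)
  have heq : f = fun x => Real.sin (s * x) * (Real.sin (s * x) * f x)
      + Real.cos (s * x) * (Real.cos (s * x) * f x) := by
    funext x
    have h := Real.sin_sq_add_cos_sq (s * x)
    linear_combination (-f x) * h
  rw [heq]
  exact hfin
end

section
/- Define f : ℝ → ℝ by f(x) = 1 if x ∈ ⋃_{k∈ℤ} [kπ, kπ + a_k] and f(x) = 0 otherwise, where a₀ = 1/4 and a_k = 1/(5|k|) for k ≠ 0. Then the function g(x) = f(x)·sin(x) satisfies ∫_ℝ |g(x)|² dx ≤ (1/3)·∑_{k∈ℤ} a_k³ < ∞, so g ∈ L²(ℝ). -/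
open Real MeasureTheory

noncomputable def aSeq (k : ℤ) : ℝ := if k = 0 then 1 / 4 else 1 / (5 * |(k : ℝ)|)

noncomputable def fCtr : ℝ → ℝ :=
  Set.indicator (⋃ k : ℤ, Set.Icc ((k : ℝ) * π) ((k : ℝ) * π + aSeq k)) 1

lemma aSeq_nonneg (k : ℤ) : 0 ≤ aSeq k := by
  unfold aSeq; split
  · norm_num
  · positivity

lemma aSeq_le (k : ℤ) : aSeq k ≤ 1 / 4 := by
  unfold aSeq; split
  · norm_num
  · rename_i h
    have h1 : (1 : ℝ) ≤ |(k : ℝ)| := by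
      rw [← Int.cast_abs]
      exact_mod_cast Int.one_le_abs (by simpa using h)
    rw [div_le_div_iff₀ (by linarith) (by norm_num)]
    linarith

lemma aSeq_nat_succ (n : ℕ) : aSeq ((n : ℤ) + 1) = 1 / (5 * ((n : ℝ) + 1)) := by
  unfold aSeq
  rw [if_neg (by positivity)]
  congr 1
  push_cast
  rw [abs_of_pos (by positivity)]

lemma aSeq_neg_nat (n : ℕ) : aSeq (-(n : ℤ)) = aSeq n := by
  unfold aSeq; simp [neg_eq_zero]

lemma aSeq_cubed_summable : Summable (fun k : ℤ => aSeq k ^ 3) := by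
  have hnat : Summable (fun n : ℕ => aSeq n ^ 3) := by
    rw [← (summable_nat_add_iff 1)]
    have hle : ∀ n : ℕ, aSeq ((n : ℕ) + 1 : ℕ) ^ 3 ≤ 1 / ((n : ℝ) + 1) ^ 3 := by
      intro n
      have h : ((((n : ℕ) + 1 : ℕ) : ℤ)) = (n : ℤ) + 1 := by push_cast; ring
      rw [h, aSeq_nat_succ, div_pow, one_pow]
      apply one_div_le_one_div_of_le (by positivity)
      have h1 : (0 : ℝ) < (n : ℝ) + 1 := by positivity
      nlinarith [pow_pos h1 3, pow_pos h1 2]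
    have hsum : Summable (fun n : ℕ => 1 / ((n : ℝ) + 1) ^ 3) := by
      have := Real.summable_one_div_nat_pow.mpr (show 1 < 3 by norm_num)
      have h2 := (summable_nat_add_iff (f := fun n : ℕ => 1 / (n : ℝ) ^ 3) 1).mpr this
      simpa using h2
    exact Summable.of_nonneg_of_le (fun n => pow_nonneg (aSeq_nonneg _) 3) hle hsum
  refine Summable.of_nat_of_neg hnat ?_
  exact (summable_congr fun n => by rw [aSeq_neg_nat]).mpr hnat

lemma interval_bound (k : ℤ) :
    ∫⁻ x in Set.Icc ((k : ℝ) * π) ((k : ℝ) * π + aSeq k), ENNReal.ofReal (Real.sin x ^ 2)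
      ≤ ENNReal.ofReal (aSeq k ^ 3 / 3) := by
  set c : ℝ := (k : ℝ) * π with hc
  set a : ℝ := aSeq k with ha
  have ha0 : 0 ≤ a := aSeq_nonneg k
  have ha4 : a ≤ 1 / 4 := aSeq_le k
  have hbound : ∀ x ∈ Set.Icc c (c + a), Real.sin x ^ 2 ≤ (x - c) ^ 2 := by
    intro x hx
    obtain ⟨h1, h2⟩ := hx
    have ht0 : 0 ≤ x - c := by linarith
    have ht1 : x - c ≤ a := by linarith
    have hsin : Real.sin x ^ 2 = Real.sin (x - c) ^ 2 := by
      conv_lhs => rw [show x = (x - c) + (k : ℝ) * π by rw [hc]; ring]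
      rw [Real.sin_add_int_mul_pi, mul_pow]
      have hpow : ((-1 : ℝ) ^ k) ^ 2 = 1 := by
        rw [← zpow_natCast ((-1 : ℝ) ^ k) 2, ← zpow_mul]
        exact Even.neg_one_zpow ⟨k, by ring⟩
      rw [hpow, one_mul]
    rw [hsin]
    have hs0 : 0 ≤ Real.sin (x - c) :=
      Real.sin_nonneg_of_nonneg_of_le_pi ht0 (by nlinarith [Real.pi_gt_three])
    have hsle : Real.sin (x - c) ≤ x - c := Real.sin_le ht0
    nlinarith
  calc ∫⁻ x in Set.Icc c (c + a), ENNReal.ofReal (Real.sin x ^ 2)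
      ≤ ∫⁻ x in Set.Icc c (c + a), ENNReal.ofReal ((x - c) ^ 2) := by
        apply setLIntegral_mono
        · exact (((continuous_id.sub continuous_const).pow 2).measurable).ennreal_ofReal
        · exact fun x hx => ENNReal.ofReal_le_ofReal (hbound x hx)
    _ = ENNReal.ofReal (∫ x in Set.Icc c (c + a), (x - c) ^ 2) := by
        rw [← MeasureTheory.ofReal_integral_eq_lintegral_ofReal]
        · exact Continuous.integrableOn_Icc (by continuity)
        · exact ae_of_all _ fun x => sq_nonneg _
    _ = ENNReal.ofReal (a ^ 3 / 3) := by
        congr 1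
        rw [MeasureTheory.integral_Icc_eq_integral_Ioc,
          ← intervalIntegral.integral_of_le (by linarith : c ≤ c + a)]
        rw [intervalIntegral.integral_comp_sub_right (fun x => x ^ 2) c, sub_self,
          show c + a - c = a by ring, integral_pow]
        norm_num

lemma fCtr_measurableSet :
    MeasurableSet (⋃ k : ℤ, Set.Icc ((k : ℝ) * π) ((k : ℝ) * π + aSeq k)) :=
  MeasurableSet.iUnion fun _ => measurableSet_Icc

lemma fCtr_pointwise (x : ℝ) :
    ENNReal.ofReal (|fCtr x * Real.sin x| ^ 2) =
      Set.indicator (⋃ k : ℤ, Set.Icc ((k : ℝ) * π) ((k : ℝ) * π + aSeq k))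
        (fun x => ENNReal.ofReal (Real.sin x ^ 2)) x := by
  unfold fCtr
  by_cases hx : x ∈ ⋃ k : ℤ, Set.Icc ((k : ℝ) * π) ((k : ℝ) * π + aSeq k)
  · simp [Set.indicator_of_mem hx, sq_abs]
  · simp [Set.indicator_of_notMem hx]

lemma fCtr_lintegral_le :
    (∫⁻ x : ℝ, ENNReal.ofReal (|fCtr x * Real.sin x| ^ 2))
      ≤ ENNReal.ofReal ((1 / 3) * ∑' k : ℤ, aSeq k ^ 3) := by
  calc ∫⁻ x : ℝ, ENNReal.ofReal (|fCtr x * Real.sin x| ^ 2)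
      = ∫⁻ x in (⋃ k : ℤ, Set.Icc ((k : ℝ) * π) ((k : ℝ) * π + aSeq k)),
          ENNReal.ofReal (Real.sin x ^ 2) := by
        rw [← lintegral_indicator fCtr_measurableSet]
        exact lintegral_congr fCtr_pointwise
    _ ≤ ∑' k : ℤ, ∫⁻ x in Set.Icc ((k : ℝ) * π) ((k : ℝ) * π + aSeq k),
          ENNReal.ofReal (Real.sin x ^ 2) := lintegral_iUnion_le _ _
    _ ≤ ∑' k : ℤ, ENNReal.ofReal (aSeq k ^ 3 / 3) := ENNReal.tsum_le_tsum interval_bound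
    _ = ENNReal.ofReal (∑' k : ℤ, aSeq k ^ 3 / 3) :=
        (ENNReal.ofReal_tsum_of_nonneg
          (fun k => div_nonneg (pow_nonneg (aSeq_nonneg k) 3) (by norm_num))
          (aSeq_cubed_summable.div_const 3)).symm
    _ = ENNReal.ofReal ((1 / 3) * ∑' k : ℤ, aSeq k ^ 3) := by
        rw [tsum_div_const]; ring_nf

theorem fCtr_sine_L2 :
    (∫⁻ x : ℝ, ENNReal.ofReal (|fCtr x * Real.sin x| ^ 2))
      ≤ ENNReal.ofReal ((1 / 3) * ∑' k : ℤ, aSeq k ^ 3) ∧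
    Summable (fun k : ℤ => aSeq k ^ 3) ∧
    MemLp (fun x => fCtr x * Real.sin x) 2 volume := by
  refine ⟨fCtr_lintegral_le, aSeq_cubed_summable, ?_⟩
  have hmeas : Measurable (fun x => fCtr x * Real.sin x) := by
    unfold fCtr
    exact (Measurable.indicator measurable_const fCtr_measurableSet).mul Real.measurable_sin
  refine ⟨hmeas.aestronglyMeasurable, ?_⟩
  rw [eLpNorm_lt_top_iff_lintegral_rpow_enorm_lt_top (by norm_num) (by norm_num)]
  have hpt : ∀ x : ℝ, ‖fCtr x * Real.sin x‖ₑ ^ (2 : ENNReal).toReal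
      = ENNReal.ofReal (|fCtr x * Real.sin x| ^ 2) := by
    intro x
    rw [ENNReal.toReal_ofNat, show ((2 : ℝ)) = ((2 : ℕ) : ℝ) by norm_num,
      ENNReal.rpow_natCast, Real.enorm_eq_ofReal_abs, ← ENNReal.ofReal_pow (abs_nonneg _)]
  simp only [hpt]
  exact lt_of_le_of_lt fCtr_lintegral_le ENNReal.ofReal_lt_top
end

section
/- Let 1 ≤ p < ∞ and let t, s be real numbers. Then the implication [for all measurable f : ℝ → ℝ, (f(·+t) − f(·) ∈ Lᵖ(ℝ) and sin(s·)·f(·) ∈ Lᵖ(ℝ)) implies f ∈ Lᵖ(ℝ)] holds if and only if t·s ∉ πℤ. -/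
open Real MeasureTheory Set

private lemma harmonic_div {c : ℝ} (hc : 0 < c) : ¬ Summable (fun n : ℕ => c / (1 + (n:ℝ))) := by
  intro h
  have h2 : Summable (fun n : ℕ => 1 / ((n:ℝ) + 1)) := by
    have := h.mul_left c⁻¹
    refine this.congr fun n => ?_
    field_simp
    ring
  have h3 : Summable (fun n : ℕ => 1 / (n:ℝ)) := by
    have := (summable_nat_add_iff (f := fun n : ℕ => 1 / (n:ℝ)) 1).mp ?_
    · exact this
    · refine h2.congr fun n => ?_
      push_cast
      ring_nf
  exact not_summable_one_div_natCast h3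

private lemma summable_aux {C : ℝ} (hC : 0 ≤ C) :
    Summable (fun n : ℤ => C / (1 + |(n:ℝ)|)^2) := by
  have base : Summable (fun n : ℤ => 1 / |(n:ℝ) + 1/2| ^ (2:ℝ)) :=
    (Real.summable_one_div_int_add_rpow (1/2) 2).2 one_lt_two
  have base2 : Summable (fun n : ℤ => C * (1 / |(n:ℝ) + 1/2| ^ (2:ℝ))) := base.mul_left C
  refine Summable.of_nonneg_of_le (fun n => by positivity) (fun n => ?_) base2
  have h1 : (0:ℝ) < |(n:ℝ) + 1/2| := by
    rcases le_or_gt (0:ℝ) (n:ℝ) with h | h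
    · rw [abs_of_pos (by linarith)]; linarith
    · have hn : n < 0 := by exact_mod_cast h
      have : (n:ℝ) ≤ -1 := by exact_mod_cast (by omega : n ≤ -1)
      rw [abs_of_neg (by linarith)]; linarith
  have h2 : |(n:ℝ) + 1/2| ≤ 1 + |(n:ℝ)| := by
    calc |(n:ℝ) + 1/2| ≤ |(n:ℝ)| + |(1:ℝ)/2| := abs_add_le _ _
    _ ≤ 1 + |(n:ℝ)| := by rw [abs_of_pos (by norm_num : (0:ℝ) < 1/2)]; linarith
  rw [Real.rpow_two, mul_one_div]
  exact div_le_div_of_nonneg_left hC (by positivity) (pow_le_pow_left₀ h1.le h2 2)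

-- step: eps diff bound
private lemma eps_diff {c : ℝ} (hc : 0 ≤ c) (k n : ℤ) :
    |c / (1 + |(n:ℝ)|) - c / (1 + |((n + k : ℤ) : ℝ)|)| ≤
      c * |(k:ℝ)| * (1 + |(k:ℝ)|) / (1 + |(n:ℝ)|) ^ 2 := by
  set A : ℝ := 1 + |(n:ℝ)| with hA'
  set B : ℝ := 1 + |((n + k : ℤ) : ℝ)| with hB'
  have hA : 1 ≤ A := by rw [hA']; simp [abs_nonneg]
  have hB : 1 ≤ B := by rw [hB']; simp [abs_nonneg]
  have hA0 : 0 < A := by linarith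
  have hB0 : 0 < B := by linarith
  have habs : |B - A| ≤ |(k:ℝ)| := by
    have : B - A = |((n + k : ℤ) : ℝ)| - |(n:ℝ)| := by rw [hA', hB']; ring
    rw [this]
    have h2 := abs_abs_sub_abs_le_abs_sub (((n + k : ℤ) : ℝ)) ((n:ℝ))
    have h3 : ((n + k : ℤ) : ℝ) - (n:ℝ) = (k:ℝ) := by push_cast; ring
    rwa [h3] at h2
  have hAB : A ≤ B * (1 + |(k:ℝ)|) := by
    have h1 : |(n:ℝ)| ≤ |((n+k : ℤ):ℝ)| + |(k:ℝ)| := by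
      have := abs_sub_abs_le_abs_sub ((n:ℝ)) (((n + k : ℤ) : ℝ))
      have h3 : (n:ℝ) - ((n + k : ℤ) : ℝ) = -(k:ℝ) := by push_cast; ring
      rw [h3, abs_neg] at this
      linarith [le_abs_self (|(n:ℝ)| - |((n+k : ℤ):ℝ)|)]
    have hk0 : 0 ≤ |(k:ℝ)| := abs_nonneg _
    nlinarith
  rw [div_sub_div _ _ hA0.ne' hB0.ne']
  rw [abs_div, abs_of_pos (by positivity : (0:ℝ) < A * B)]
  have hnum : |c * B - c * A| ≤ c * |(k:ℝ)| := by
    rw [← mul_sub, abs_mul, abs_of_nonneg hc]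
    exact mul_le_mul_of_nonneg_left habs hc
  rw [div_le_div_iff₀ (by positivity) (by positivity)]
  have hre : |c * B - A * c| = |c * B - c * A| := by ring_nf
  rw [hre]
  have e1 : |c * B - c * A| * A ^ 2 ≤ c * |(k:ℝ)| * A ^ 2 :=
    mul_le_mul_of_nonneg_right hnum (by positivity)
  refine e1.trans ?_
  have e2 : A ^ 2 ≤ (1 + |(k:ℝ)|) * (A * B) := by nlinarith
  nlinarith [abs_nonneg ((k:ℝ)), mul_nonneg hc (abs_nonneg ((k:ℝ)))]

private lemma forward_dir (p : ℝ) (t s : ℝ) (hts : ∀ k : ℤ, t * s ≠ k * π)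
    (f : ℝ → ℝ) (hf : Measurable f)
    (h1 : MemLp (fun x => f (x + t) - f x) (ENNReal.ofReal p) volume)
    (h2 : MemLp (fun x => Real.sin (s * x) * f x) (ENNReal.ofReal p) volume) :
    MemLp f (ENNReal.ofReal p) volume := by
  set P := ENNReal.ofReal p with hP
  have hst : Real.sin (s * t) ≠ 0 := by
    rw [Real.sin_ne_zero_iff]
    intro k hk
    exact hts k (by linarith [hk])
  have hmp : MeasurePreserving (fun x : ℝ => x + t) volume volume :=
    measurePreserving_add_right volume t
  have h2t : MemLp (fun x => Real.sin (s * (x + t)) * f (x + t)) P volume :=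
    h2.comp_measurePreserving hmp
  have hfm : Measurable (fun x => f (x + t)) := hf.comp (measurable_id.add_const t)
  have msin : Measurable (fun x : ℝ => Real.sin (s * x)) :=
    Real.measurable_sin.comp (measurable_const.mul measurable_id)
  have mcos : Measurable (fun x : ℝ => Real.cos (s * x)) :=
    Real.measurable_cos.comp (measurable_const.mul measurable_id)
  have bound_mul : ∀ (g h : ℝ → ℝ), Measurable h → (∀ x, |h x| ≤ 1) → MemLp g P volume →
      Measurable g → MemLp (fun x => h x * g x) P volume := by
    intro g h hh hb hg hgm
    refine hg.of_le (hh.mul hgm).aestronglyMeasurable (Filter.Eventually.of_forall fun x => ?_)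
    simp only [norm_mul, Real.norm_eq_abs]
    calc |h x| * |g x| ≤ 1 * |g x| := by gcongr; exact hb x
      _ = |g x| := one_mul _
  -- sin(sx) * diff ∈ Lp
  have hsd : MemLp (fun x => Real.sin (s * x) * (f (x + t) - f x)) P volume :=
    bound_mul _ _ msin (fun x => Real.abs_sin_le_one _) h1 (hfm.sub hf)
  -- sin(sx) * f(x+t) ∈ Lp
  have h3 : MemLp (fun x => Real.sin (s * x) * f (x + t)) P volume := by
    have h := h2.add hsd
    have heq : (fun x => Real.sin (s * x) * f (x + t)) =
        (fun x => Real.sin (s * x) * f x) + fun x => Real.sin (s * x) * (f (x + t) - f x) := by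
      funext x; simp [Pi.add_apply]; ring
    rw [heq]; exact h
  -- cos(sx) * f(x+t) ∈ Lp
  have h4 : MemLp (fun x => Real.cos (s * x) * f (x + t)) P volume := by
    have h := ((h2t.sub (h3.const_mul (Real.cos (s * t)))).const_mul (Real.sin (s * t))⁻¹)
    have heq : (fun x => Real.cos (s * x) * f (x + t)) =
        fun x => (Real.sin (s * t))⁻¹ *
          ((fun x => Real.sin (s * (x + t)) * f (x + t)) x -
           Real.cos (s * t) * (Real.sin (s * x) * f (x + t))) := by
      funext x
      show Real.cos (s * x) * f (x + t) = (Real.sin (s * t))⁻¹ *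
        (Real.sin (s * (x + t)) * f (x + t) - Real.cos (s * t) * (Real.sin (s * x) * f (x + t)))
      rw [show s * (x + t) = s * x + s * t by ring, Real.sin_add]
      field_simp
      ring
    rw [heq]; exact h
  -- cos(sx) * f(x) ∈ Lp
  have hcd : MemLp (fun x => Real.cos (s * x) * (f (x + t) - f x)) P volume :=
    bound_mul _ _ mcos (fun x => Real.abs_cos_le_one _) h1 (hfm.sub hf)
  have h5 : MemLp (fun x => Real.cos (s * x) * f x) P volume := by
    have h := h4.sub hcd
    have heq : (fun x => Real.cos (s * x) * f x) =
        (fun x => Real.cos (s * x) * f (x + t)) - fun x => Real.cos (s * x) * (f (x + t) - f x) := by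
      funext x; simp [Pi.sub_apply]; ring
    rw [heq]; exact h
  -- combine
  have h6 : MemLp (fun x => |Real.sin (s * x) * f x| + |Real.cos (s * x) * f x|) P volume := by
    have := (h2.abs.add h5.abs)
    exact this
  refine h6.of_le hf.aestronglyMeasurable (Filter.Eventually.of_forall fun x => ?_)
  simp only [Real.norm_eq_abs, abs_mul]
  have hs1 : |Real.sin (s * x)| ≤ 1 := Real.abs_sin_le_one _
  have hc1 : |Real.cos (s * x)| ≤ 1 := Real.abs_cos_le_one _
  have hpyth : Real.sin (s*x)^2 + Real.cos (s*x)^2 = 1 := Real.sin_sq_add_cos_sq _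
  have e1 : Real.sin (s*x)^2 ≤ |Real.sin (s*x)| := by
    nlinarith [abs_nonneg (Real.sin (s*x)), sq_abs (Real.sin (s*x))]
  have e2 : Real.cos (s*x)^2 ≤ |Real.cos (s*x)| := by
    nlinarith [abs_nonneg (Real.cos (s*x)), sq_abs (Real.cos (s*x))]
  have hfx := abs_nonneg (f x)
  have key : |f x| ≤ |Real.sin (s*x)| * |f x| + |Real.cos (s*x)| * |f x| := by
    nlinarith [mul_le_mul_of_nonneg_right e1 hfx, mul_le_mul_of_nonneg_right e2 hfx]
  exact le_trans key (le_abs_self _)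

private lemma counter (p t s : ℝ) (hp : 1 ≤ p) (hs : 0 < s) (k : ℤ) (htk : t * s = k * π) :
    ∃ f : ℝ → ℝ, Measurable f ∧ MemLp (fun x => f (x + t) - f x) (ENNReal.ofReal p) volume ∧
      MemLp (fun x => Real.sin (s * x) * f x) (ENNReal.ofReal p) volume ∧
      ¬ MemLp f (ENNReal.ofReal p) volume := by
  have hp0 : 0 < p := lt_of_lt_of_le one_pos hp
  set P := ENNReal.ofReal p with hP
  have hP0 : P ≠ 0 := by simp [hP, ENNReal.ofReal_eq_zero]; linarith
  have hPt : P ≠ ⊤ := ENNReal.ofReal_ne_top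
  have hPr : P.toReal = p := ENNReal.toReal_ofReal hp0.le
  set δ : ℝ := π / s with hδ'
  have hδ : 0 < δ := div_pos Real.pi_pos hs
  have ht : t = k * δ := by
    rw [hδ']
    field_simp
    linarith
  set c : ℝ := min 1 (δ / 2) with hc'
  have hc : 0 < c := lt_min one_pos (by linarith)
  have hc1 : c ≤ 1 := min_le_left _ _
  have hc2 : c ≤ δ / 2 := min_le_right _ _
  set ε : ℤ → ℝ := fun n => c / (1 + |(n:ℝ)|) with hε'
  have hε : ∀ n, 0 < ε n := fun n => div_pos hc (by positivity)
  have hεc : ∀ n, ε n ≤ c := fun n => by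
    rw [hε']
    rw [div_le_iff₀ (by positivity)]
    nlinarith [abs_nonneg ((n:ℝ)), hc.le]
  set z : ℤ → ℝ := fun n => n * δ with hz'
  set I : ℤ → Set ℝ := fun n => Ioc (z n) (z n + ε n) with hI'
  set E : Set ℝ := ⋃ n, I n with hE'
  have measI : ∀ n, MeasurableSet (I n) := fun n => measurableSet_Ioc
  have measE : MeasurableSet E := MeasurableSet.iUnion measI
  set f : ℝ → ℝ := E.indicator (fun _ => 1) with hf'
  have hfmeas : Measurable f := measurable_const.indicator measE
  -- translated indicator
  set E' : Set ℝ := ⋃ n, Ioc (z n) (z n + ε (n + k)) with hE2'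
  have measE' : MeasurableSet E' := MeasurableSet.iUnion fun n => measurableSet_Ioc
  have htrans : ∀ x : ℝ, f (x + t) = E'.indicator (fun _ => (1:ℝ)) x := by
    intro x
    have hmem : x + t ∈ E ↔ x ∈ E' := by
      simp only [hE', hE2', hI', mem_iUnion, mem_Ioc]
      constructor
      · rintro ⟨n, h1, h2⟩
        refine ⟨n - k, ?_, ?_⟩
        · have : z (n - k) = z n - t := by rw [hz', ht]; push_cast; ring
          rw [this]; linarith
        · have h3 : n - k + k = n := by ring
          rw [h3]
          have : z (n - k) = z n - t := by rw [hz', ht]; push_cast; ring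
          rw [this]; linarith
      · rintro ⟨n, h1, h2⟩
        refine ⟨n + k, ?_, ?_⟩
        · have : z (n + k) = z n + t := by rw [hz', ht]; push_cast; ring
          rw [this]; linarith
        · have : z (n + k) = z n + t := by rw [hz', ht]; push_cast; ring
          rw [this]; linarith
    rw [hf']
    by_cases hx : x ∈ E'
    · rw [indicator_of_mem hx, indicator_of_mem (hmem.2 hx)]
    · rw [indicator_of_notMem hx, indicator_of_notMem (fun h => hx (hmem.1 h))]
  refine ⟨f, hfmeas, ?_, ?_, ?_⟩
  · -- difference in Lp
    set D : Set ℝ := ⋃ n, Ioc (z n + min (ε n) (ε (n + k))) (z n + max (ε n) (ε (n + k))) with hD'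
    have measD : MeasurableSet D := MeasurableSet.iUnion fun n => measurableSet_Ioc
    have hμD : volume D ≠ ⊤ := by
      have hle : volume D ≤ ∑' n : ℤ, volume (Ioc (z n + min (ε n) (ε (n + k))) (z n + max (ε n) (ε (n + k)))) :=
        measure_iUnion_le _
      have hvol : ∀ n : ℤ, volume (Ioc (z n + min (ε n) (ε (n + k))) (z n + max (ε n) (ε (n + k)))) ≤
          ENNReal.ofReal (c * |(k:ℝ)| * (1 + |(k:ℝ)|) / (1 + |(n:ℝ)|) ^ 2) := by
        intro n
        rw [Real.volume_Ioc]
        apply ENNReal.ofReal_le_ofReal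
        have h5 : z n + max (ε n) (ε (n + k)) - (z n + min (ε n) (ε (n + k))) =
            max (ε n) (ε (n + k)) - min (ε n) (ε (n + k)) := by ring
        rw [h5, max_sub_min_eq_abs, hε']
        simpa [abs_sub_comm] using eps_diff hc.le k n
      have hsum : Summable (fun n : ℤ => c * |(k:ℝ)| * (1 + |(k:ℝ)|) / (1 + |(n:ℝ)|) ^ 2) :=
        summable_aux (by positivity)
      have : (∑' n : ℤ, ENNReal.ofReal (c * |(k:ℝ)| * (1 + |(k:ℝ)|) / (1 + |(n:ℝ)|) ^ 2)) ≠ ⊤ := by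
        rw [← ENNReal.ofReal_tsum_of_nonneg (fun n => by positivity) hsum]
        exact ENNReal.ofReal_ne_top
      exact (lt_of_le_of_lt (hle.trans (ENNReal.tsum_le_tsum hvol)) (lt_top_iff_ne_top.2 this)).ne
    have hind : MemLp (D.indicator (fun _ => (1:ℝ))) P volume :=
      memLp_indicator_const P measD 1 (Or.inr hμD)
    refine hind.of_le ((hfmeas.comp (measurable_id.add_const t)).sub hfmeas).aestronglyMeasurable
      (Filter.Eventually.of_forall fun x => ?_)
    simp only [Real.norm_eq_abs]
    rw [htrans x]
    by_cases hx1 : x ∈ E' <;> by_cases hx2 : x ∈ E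
    · rw [indicator_of_mem hx1, hf', indicator_of_mem hx2]
      simp [abs_nonneg]
    · -- x ∈ E', x ∉ E : x ∈ D
      have hxD : x ∈ D := by
        simp only [hE2', mem_iUnion, mem_Ioc] at hx1
        obtain ⟨n, h1, h2⟩ := hx1
        have hx2' : ¬ (z n < x ∧ x ≤ z n + ε n) := by
          intro h
          exact hx2 (by simp only [hE', hI', mem_iUnion, mem_Ioc]; exact ⟨n, h⟩)
        push_neg at hx2'
        have h4 : z n + ε n < x := lt_of_not_ge fun hcon => absurd (hx2' h1) (not_lt.2 hcon)
        simp only [hD', mem_iUnion, mem_Ioc]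
        refine ⟨n, lt_of_le_of_lt ?_ h4, h2.trans ?_⟩
        · simp only [add_le_add_iff_left]; exact min_le_left _ _
        · simp only [add_le_add_iff_left]; exact le_max_right _ _
      rw [indicator_of_mem hx1, hf', indicator_of_notMem hx2, indicator_of_mem hxD]
      simp
    · -- x ∉ E', x ∈ E : x ∈ D
      have hxD : x ∈ D := by
        simp only [hE', hI', mem_iUnion, mem_Ioc] at hx2
        obtain ⟨n, h1, h2⟩ := hx2
        have hx1' : ¬ (z n < x ∧ x ≤ z n + ε (n + k)) := by
          intro h
          exact hx1 (by simp only [hE2', mem_iUnion, mem_Ioc]; exact ⟨n, h⟩)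
        push_neg at hx1'
        have h4 : z n + ε (n + k) < x := lt_of_not_ge fun hcon => absurd (hx1' h1) (not_lt.2 hcon)
        simp only [hD', mem_iUnion, mem_Ioc]
        refine ⟨n, lt_of_le_of_lt ?_ h4, h2.trans ?_⟩
        · simp only [add_le_add_iff_left]; exact min_le_right _ _
        · simp only [add_le_add_iff_left]; exact le_max_left _ _
      rw [indicator_of_mem hxD, indicator_of_notMem hx1, hf', indicator_of_mem hx2]
      simp
    · rw [indicator_of_notMem hx1, hf', indicator_of_notMem hx2]
      simp [abs_nonneg]
  · -- sin part
    have msin : Measurable (fun x : ℝ => Real.sin (s * x)) :=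
      Real.measurable_sin.comp (measurable_const.mul measurable_id)
    have hsinb : ∀ (n : ℤ) (x : ℝ), x ∈ I n → |Real.sin (s * x)| ≤ s * ε n := by
      intro n x hx
      rw [hI', mem_Ioc] at hx
      have h1 : s * x = s * (x - z n) + (n : ℤ) * π := by
        rw [hz', hδ']; field_simp; ring
      rw [h1, Real.sin_add_int_mul_pi, abs_mul]
      have hone : |((-1:ℝ)) ^ n| = 1 := by
        rcases Int.even_or_odd n with h | h
        · rw [h.neg_one_zpow, abs_one]
        · rw [Odd.neg_one_zpow h, abs_neg, abs_one]
      rw [hone, one_mul]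
      refine Real.abs_sin_le_abs.trans ?_
      rw [abs_of_pos (by nlinarith [hx.1] : (0:ℝ) < s * (x - z n))]
      nlinarith [hx.2]
    refine ⟨(msin.mul hfmeas).aestronglyMeasurable, ?_⟩
    rw [eLpNorm_eq_lintegral_rpow_enorm_toReal hP0 hPt, hPr]
    have key : (∫⁻ x, (‖Real.sin (s * x) * f x‖₊ : ENNReal) ^ p) < ⊤ := by
      have hpt : ∀ x, (‖Real.sin (s * x) * f x‖₊ : ENNReal) ^ p
          = E.indicator (fun x => ENNReal.ofReal (|Real.sin (s * x)| ^ p)) x := by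
        intro x
        by_cases hx : x ∈ E
        · rw [indicator_of_mem hx, hf', indicator_of_mem hx, mul_one,
            ← ENNReal.ofReal_coe_nnreal, coe_nnnorm, Real.norm_eq_abs,
            ENNReal.ofReal_rpow_of_nonneg (abs_nonneg _) hp0.le]
        · rw [indicator_of_notMem hx, hf', indicator_of_notMem hx, mul_zero]
          simp [ENNReal.zero_rpow_of_pos hp0]
      have hfeq : (fun x => (‖Real.sin (s * x) * f x‖₊ : ENNReal) ^ p)
          = E.indicator (fun x => ENNReal.ofReal (|Real.sin (s * x)| ^ p)) := funext hpt
      rw [hfeq, lintegral_indicator measE, hE']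
      refine lt_of_le_of_lt (lintegral_iUnion_le _ _) ?_
      have hterm : ∀ n : ℤ, (∫⁻ x in I n, ENNReal.ofReal (|Real.sin (s * x)| ^ p))
          ≤ ENNReal.ofReal (s ^ p * c ^ 2 / (1 + |(n:ℝ)|) ^ 2) := by
        intro n
        have step1 : (∫⁻ x in I n, ENNReal.ofReal (|Real.sin (s * x)| ^ p))
            ≤ ∫⁻ _ in I n, ENNReal.ofReal ((s * ε n) ^ p) := by
          refine setLIntegral_mono measurable_const fun x hx => ?_
          exact ENNReal.ofReal_le_ofReal
            (Real.rpow_le_rpow (abs_nonneg _) (hsinb n x hx) hp0.le)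
        refine step1.trans ?_
        rw [setLIntegral_const, hI', Real.volume_Ioc, add_sub_cancel_left,
          ← ENNReal.ofReal_mul (by positivity)]
        apply ENNReal.ofReal_le_ofReal
        have e1 : (s * ε n) ^ p = s ^ p * (ε n) ^ p := Real.mul_rpow hs.le (hε n).le
        have e2 : (ε n) ^ p ≤ ε n := by
          have := Real.rpow_le_rpow_of_exponent_ge (hε n) ((hεc n).trans hc1) hp
          rwa [Real.rpow_one] at this
        have e3 : (s * ε n) ^ p * ε n ≤ s ^ p * (ε n * ε n) := by
          rw [e1, mul_assoc]
          have hsp : (0:ℝ) ≤ s ^ p := (Real.rpow_pos_of_pos hs p).le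
          exact mul_le_mul_of_nonneg_left (mul_le_mul_of_nonneg_right e2 (hε n).le) hsp
        refine e3.trans ?_
        have e4 : ε n * ε n = c ^ 2 / (1 + |(n:ℝ)|) ^ 2 := by
          rw [hε']; field_simp
        rw [e4, mul_div_assoc]
      refine lt_of_le_of_lt (ENNReal.tsum_le_tsum hterm) ?_
      have hsum : Summable (fun n : ℤ => s ^ p * c ^ 2 / (1 + |(n:ℝ)|) ^ 2) :=
        summable_aux (by positivity)
      rw [← ENNReal.ofReal_tsum_of_nonneg (fun n => by positivity) hsum]
      exact ENNReal.ofReal_lt_top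
    exact ENNReal.rpow_lt_top_of_nonneg (by positivity) key.ne
  · -- not MemLp
    intro hmem
    have hμE : volume E = ⊤ := by
      have hsub : (⋃ m : ℕ, I (m : ℤ)) ⊆ E := iUnion_subset fun m => subset_iUnion I ((m : ℤ))
      have hdisj : Pairwise (Function.onFun Disjoint fun m : ℕ => I ((m : ℤ))) := by
        have key : ∀ a b : ℕ, a < b → Disjoint (I ((a:ℤ))) (I ((b:ℤ))) := by
          intro a b hab
          rw [hI', Set.Ioc_disjoint_Ioc]
          have hza : z a + ε a ≤ z b := by
            have h1 : ε (a:ℤ) ≤ δ / 2 := (hεc _).trans hc2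
            have h2 : z (a:ℤ) + δ ≤ z (b:ℤ) := by
              simp only [hz']
              push_cast
              have : ((a:ℝ) + 1) ≤ (b:ℝ) := by exact_mod_cast hab
              nlinarith
            linarith
          exact le_trans (min_le_left _ _) (hza.trans (le_max_right _ _))
        intro m n hmn
        rcases lt_or_gt_of_ne hmn with h | h
        · exact key m n h
        · exact (key n m h).symm
      have hUvol : volume (⋃ m : ℕ, I ((m : ℤ))) = ∑' m : ℕ, volume (I ((m:ℤ))) :=
        measure_iUnion hdisj fun m => measI _
      have hIvol : ∀ m : ℕ, volume (I ((m:ℤ))) = ENNReal.ofReal (ε m) := by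
        intro m
        rw [hI', Real.volume_Ioc, add_sub_cancel_left]
      have htop : (∑' m : ℕ, volume (I ((m:ℤ)))) = ⊤ := by
        by_contra hne
        have hsummable := ENNReal.summable_toReal hne
        have : Summable (fun m : ℕ => c / (1 + (m:ℝ))) := by
          refine hsummable.congr fun m => ?_
          rw [hIvol m, ENNReal.toReal_ofReal (hε _).le, hε']
          push_cast
          rw [abs_of_nonneg (by positivity : (0:ℝ) ≤ (m:ℝ))]
        exact harmonic_div hc this
      have := measure_mono (μ := volume) hsub
      rw [hUvol, htop, top_le_iff] at this
      exact this
    have hlt := hmem.2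
    rw [hf', eLpNorm_indicator_const measE hP0 hPt, hμE, hPr] at hlt
    rw [ENNReal.top_rpow_of_pos (by positivity : (0:ℝ) < 1 / p)] at hlt
    simp at hlt

theorem assertive_iff_not_multiple_of_pi (p : ℝ) (hp : 1 ≤ p) (t s : ℝ) :
    (∀ f : ℝ → ℝ, Measurable f →
        MemLp (fun x => f (x + t) - f x) (ENNReal.ofReal p) volume →
        MemLp (fun x => Real.sin (s * x) * f x) (ENNReal.ofReal p) volume →
        MemLp f (ENNReal.ofReal p) volume) ↔
      ∀ k : ℤ, t * s ≠ k * π := by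
  have hp0 : 0 < p := lt_of_lt_of_le one_pos hp
  have hP0 : ENNReal.ofReal p ≠ 0 := by simp [ENNReal.ofReal_eq_zero]; linarith
  have hPt : ENNReal.ofReal p ≠ ⊤ := ENNReal.ofReal_ne_top
  constructor
  · intro H k hk
    by_cases hs0 : s = 0
    · subst hs0
      have h1 : MemLp (fun x : ℝ => (fun _ : ℝ => (1:ℝ)) (x + t) - (fun _ : ℝ => (1:ℝ)) x)
          (ENNReal.ofReal p) volume := by
        have : (fun x : ℝ => (fun _ : ℝ => (1:ℝ)) (x + t) - (fun _ : ℝ => (1:ℝ)) x)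
            = fun _ : ℝ => (0:ℝ) := by funext x; simp
        rw [this]
        exact MemLp.zero
      have h2 : MemLp (fun x : ℝ => Real.sin (0 * x) * (fun _ : ℝ => (1:ℝ)) x)
          (ENNReal.ofReal p) volume := by
        have : (fun x : ℝ => Real.sin (0 * x) * (fun _ : ℝ => (1:ℝ)) x)
            = fun _ : ℝ => (0:ℝ) := by funext x; simp
        rw [this]
        exact MemLp.zero
      have hmem := H (fun _ => 1) measurable_const h1 h2
      have hlt := hmem.2
      have hvol : (volume : Measure ℝ) ≠ 0 := by
        intro h0
        have := congrArg (fun μ : Measure ℝ => μ (Set.Ioo (0:ℝ) 1)) h0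
        simp [Real.volume_Ioo] at this
      rw [eLpNorm_const (1:ℝ) hP0 hvol] at hlt
      rw [Real.volume_univ, ENNReal.toReal_ofReal hp0.le,
        ENNReal.top_rpow_of_pos (by positivity : (0:ℝ) < 1 / p)] at hlt
      simp at hlt
    · rcases lt_or_gt_of_ne hs0 with hneg | hpos
      · obtain ⟨f, hm, h1, h2, h3⟩ := counter p t (-s) hp (by linarith) (-k)
          (by push_cast; linarith)
        refine h3 (H f hm h1 ?_)
        have heq : (fun x => Real.sin (s * x) * f x)
            = fun x => -(Real.sin (-s * x) * f x) := by
          funext x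
          rw [show -s * x = -(s * x) by ring, Real.sin_neg]
          ring
        rw [heq]
        exact h2.neg
      · obtain ⟨f, hm, h1, h2, h3⟩ := counter p t s hp hpos k hk
        exact h3 (H f hm h1 h2)
  · intro hk f hf h1 h2
    exact forward_dir p t s hk f hf h1 h2
end

section
/- Let F : ℝⁿ → ℝ be measurable, 1 ≤ p < ∞, and suppose F(x)·sin(x_j) ∈ Lᵖ(ℝⁿ) for each 1 ≤ j ≤ n. Then F(x)·sin(⟨b,x⟩) ∈ Lᵖ(ℝⁿ) for every b ∈ ℤⁿ. -/
open Real MeasureTheory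

theorem sine_inner_Lp (n : ℕ) (p : ℝ) (hp : 1 ≤ p)
    (F : (Fin n → ℝ) → ℝ) (hF : Measurable F)
    (h : ∀ j : Fin n, MemLp (fun x => F x * Real.sin (x j)) (ENNReal.ofReal p) volume) :
    ∀ b : Fin n → ℤ,
      MemLp (fun x => F x * Real.sin (∑ j, (b j : ℝ) * x j)) (ENNReal.ofReal p) volume := by
  have measSum : ∀ c : Fin n → ℤ, Measurable (fun x : Fin n → ℝ => ∑ k, (c k : ℝ) * x k) := by
    intro c
    exact Finset.measurable_sum _ (fun k _ => (measurable_pi_apply k).const_mul _)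
  have key : ∀ N : ℕ, ∀ b : Fin n → ℤ, (∑ j, (b j).natAbs) = N →
      MemLp (fun x => F x * Real.sin (∑ j, (b j : ℝ) * x j)) (ENNReal.ofReal p) volume := by
    intro N
    induction N using Nat.strong_induction_on with
    | _ N ih =>
      intro b hb
      by_cases h0 : ∀ j, b j = 0
      · have he : (fun x : Fin n → ℝ => F x * Real.sin (∑ j, (b j : ℝ) * x j))
            = fun _ => (0 : ℝ) := by
          funext x; simp [h0]
        rw [he]
        exact MemLp.zero'
      · push_neg at h0
        obtain ⟨j, hj⟩ := h0
        set s : ℤ := if 0 < b j then 1 else -1 with hs_def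
        set b' : Fin n → ℤ := Function.update b j (b j - s) with hb'_def
        have hs1 : s = 1 ∨ s = -1 := by
          by_cases hpos : 0 < b j
          · left; simp [hs_def, hpos]
          · right; simp [hs_def, hpos]
        have hdec : (∑ k, (b' k).natAbs) < N := by
          have hsum : (∑ k, (b' k).natAbs) = (∑ k, (b k).natAbs) - 1 := by
            have h1 : (b' j).natAbs = (b j).natAbs - 1 := by
              rcases hs1 with hs | hs <;> simp only [hb'_def, Function.update_self, hs] <;> omega
            have h2 : ∀ k, k ≠ j → (b' k).natAbs = (b k).natAbs := by
              intro k hk; simp [hb'_def, Function.update_of_ne hk]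
            have hle : 1 ≤ (b j).natAbs := by omega
            have e1 : (b' j).natAbs + ∑ k ∈ Finset.univ.erase j, (b' k).natAbs
                = ∑ k, (b' k).natAbs :=
              Finset.add_sum_erase Finset.univ (fun k => (b' k).natAbs) (Finset.mem_univ j)
            have e2 : (b j).natAbs + ∑ k ∈ Finset.univ.erase j, (b k).natAbs
                = ∑ k, (b k).natAbs :=
              Finset.add_sum_erase Finset.univ (fun k => (b k).natAbs) (Finset.mem_univ j)
            have e3 : ∑ k ∈ Finset.univ.erase j, (b' k).natAbs
                = ∑ k ∈ Finset.univ.erase j, (b k).natAbs := by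
              refine Finset.sum_congr rfl (fun k hk => ?_)
              exact h2 k (Finset.ne_of_mem_erase hk)
            omega
          have hNpos : 0 < N := by
            rcases Nat.eq_zero_or_pos N with h' | h'
            · exfalso; rw [h'] at hb
              have := Finset.sum_eq_zero_iff.mp hb j (Finset.mem_univ j)
              omega
            · exact h'
          omega
        have hIH := ih _ hdec b' rfl
        -- the inner sum splits
        have hsplit : ∀ x : Fin n → ℝ,
            ∑ k, (b k : ℝ) * x k = (∑ k, (b' k : ℝ) * x k) + (s : ℝ) * x j := by
          intro x
          have : ∀ k, (b k : ℝ) * x k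
              = (b' k : ℝ) * x k + (if k = j then (s : ℝ) * x j else 0) := by
            intro k
            by_cases hk : k = j
            · subst hk
              simp only [hb'_def, Function.update_self, if_true]
              push_cast
              ring
            · simp [hb'_def, Function.update_of_ne hk, hk]
          rw [Finset.sum_congr rfl (fun k _ => this k), Finset.sum_add_distrib,
            Finset.sum_ite_eq' Finset.univ j]
          simp
        have hsin : ∀ x : ℝ, Real.sin ((s : ℝ) * x) = (s : ℝ) * Real.sin x := by
          intro x
          rcases hs1 with hs | hs <;> simp [hs]
        have hcos : ∀ x : ℝ, Real.cos ((s : ℝ) * x) = Real.cos x := by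
          intro x
          rcases hs1 with hs | hs <;> simp [hs]
        set A : (Fin n → ℝ) → ℝ := fun x => ∑ k, (b' k : ℝ) * x k with hA
        have hAmeas : Measurable A := measSum b'
        -- term 1 : (F x * sin (A x)) * cos (x j)
        have hterm1 : MemLp (fun x => (F x * Real.sin (A x)) * Real.cos (x j))
            (ENNReal.ofReal p) volume := by
          refine MemLp.of_le hIH ?_ ?_
          · exact (((hF.mul (Real.measurable_sin.comp hAmeas))).mul
              (Real.measurable_cos.comp (measurable_pi_apply j))).aestronglyMeasurable
          · filter_upwards with x
            rw [norm_mul]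
            exact mul_le_of_le_one_right (norm_nonneg _)
              (by rw [Real.norm_eq_abs]; exact Real.abs_cos_le_one _)
        -- term 2 : ((s:ℝ) * cos (A x)) * (F x * sin (x j))
        have hterm2 : MemLp (fun x => ((s : ℝ) * Real.cos (A x)) * (F x * Real.sin (x j)))
            (ENNReal.ofReal p) volume := by
          refine MemLp.of_le (h j) ?_ ?_
          · exact ((measurable_const.mul (Real.measurable_cos.comp hAmeas)).mul
              (hF.mul (Real.measurable_sin.comp (measurable_pi_apply j)))).aestronglyMeasurable
          · filter_upwards with x
            rw [norm_mul]
            have habs : ‖(s : ℝ) * Real.cos (A x)‖ ≤ 1 := by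
              rw [Real.norm_eq_abs, abs_mul]
              have h1 : |(s : ℝ)| = 1 := by rcases hs1 with hs | hs <;> simp [hs]
              rw [h1, one_mul]
              exact Real.abs_cos_le_one _
            calc ‖(s : ℝ) * Real.cos (A x)‖ * ‖F x * Real.sin (x j)‖
                ≤ 1 * ‖F x * Real.sin (x j)‖ := by
                  exact mul_le_mul_of_nonneg_right habs (norm_nonneg _)
              _ = ‖F x * Real.sin (x j)‖ := one_mul _
        have heq : (fun x : Fin n → ℝ => F x * Real.sin (∑ k, (b k : ℝ) * x k))
            = fun x => (F x * Real.sin (A x)) * Real.cos (x j)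
              + ((s : ℝ) * Real.cos (A x)) * (F x * Real.sin (x j)) := by
          funext x
          rw [hsplit x, Real.sin_add, hsin, hcos]
          ring
        rw [heq]
        exact hterm1.add hterm2
  intro b
  exact key _ b rfl
end
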